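/- If m is a basic tuple of p partitions of n, then n ≤ 3·|idx(m)| + 6. -/

import Mathlib

/-- The index of rigidity of a tuple of `p` partitions of `n`. -/
def idx (p n : ℕ) (m : Fin p → List ℕ) : ℤ :=
  2 * (n : ℤ) ^ 2 - ∑ j : Fin p, ((n : ℤ) ^ 2 - ((m j).map (fun x => (x : ℤ) ^ 2)).sum)

/-- `m` is a tuple of `p` partitions of `n`: each `m j` is a monotone non-increasing
list of positive integers summing to `n` with at least two parts. -/
def IsTuple (p n : ℕ) (m : Fin p → List ℕ) : Prop :=
  0 < n ∧ ∀ j, (m j).Pairwise (· ≥ ·) ∧ (∀ x ∈ m j, 0 < x) ∧ (m j).sum = n ∧ 2 ≤ (m j).length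

/-- The tuple is indivisible: no integer `k ≥ 2` divides all the entries. -/
def Indivisible (p : ℕ) (m : Fin p → List ℕ) : Prop :=
  ∀ k : ℕ, (∀ j, ∀ x ∈ m j, k ∣ x) → k = 1

/-- The tuple is basic: it is a tuple of partitions, `2n ≤ Σⱼ (n − m_{j,1})`,
and it is indivisible. -/
def IsBasic (p n : ℕ) (m : Fin p → List ℕ) : Prop :=
  IsTuple p n m ∧ 2 * (n : ℤ) ≤ (∑ j : Fin p, ((n : ℤ) - ((m j).headI : ℤ)))
    ∧ Indivisible p m

/-- The tuple is fundamental: it is basic, or it is a positive integer multiple `k·m'`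
of a basic tuple `m'` with `idx m' ≠ 0`. -/
def IsFundamental (p n : ℕ) (m : Fin p → List ℕ) : Prop :=
  ∃ (k n' : ℕ) (m' : Fin p → List ℕ), 0 < k ∧ n = k * n' ∧
    (∀ j, m j = (m' j).map (fun x => k * x)) ∧ IsBasic p n' m' ∧
    (k = 1 ∨ idx p n' m' ≠ 0)


lemma coe_fix (L : List ℕ) : (L.map (fun x => (x : ℤ) ^ 2)).sum = ((L.map (fun x : ℕ => ((x:ℤ))^2)).sum) := by
  induction L with
  | nil => rfl
  | cons x t ih =>
    show (List.map (fun x : ℤ => x ^ 2) ((x :: t).flatMap fun a : ℕ => [(a : ℤ)])).sum = _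
    simp only [List.flatMap_cons, List.map_append, List.sum_append, List.map_cons, List.map_nil,
      List.sum_cons, List.sum_nil]
    exact congrArg (fun z => ((x:ℤ)^2 + 0) + z) ih

/-- deficiency of a partition list w.r.t. its head and total `n`. -/
def Dz (n : ℕ) (L : List ℕ) : ℤ :=
  (L.headI : ℤ) * n - (L.map (fun x : ℕ => (x : ℤ) ^ 2)).sum

lemma sum_map_split {α : Type*} (l : List α) (p : α → Bool) (f : α → ℤ) :
    ((l.filter p).map f).sum + ((l.filter (fun x => !(p x))).map f).sum = (l.map f).sum := by
  induction l with
  | nil => simp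
  | cons x t ih =>
    by_cases hp : p x <;> simp [List.filter_cons, hp] <;> linarith

lemma sum_split_nat {α : Type*} (l : List α) (p : α → Bool) (f : α → ℕ) :
    ((l.filter p).map f).sum + ((l.filter (fun x => !(p x))).map f).sum = (l.map f).sum := by
  induction l with
  | nil => simp
  | cons x t ih =>
    by_cases hp : p x <;> simp [List.filter_cons, hp] <;> omega

lemma sum_map_nonneg {α : Type*} (l : List α) (f : α → ℤ) (h : ∀ x ∈ l, 0 ≤ f x) :
    0 ≤ (l.map f).sum := by
  induction l with
  | nil => simp
  | cons x t ih =>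
    simp only [List.map_cons, List.sum_cons]
    have h1 := h x (by simp)
    have h2 := ih (fun y hy => h y (by simp [hy]))
    linarith

lemma sum_map_ge_card {α : Type*} (l : List α) (f : α → ℤ) (b : ℤ)
    (h : ∀ x ∈ l, b ≤ f x) : (l.length : ℤ) * b ≤ (l.map f).sum := by
  induction l with
  | nil => simp
  | cons x t ih =>
    simp only [List.map_cons, List.sum_cons, List.length_cons]
    have h1 := h x (by simp)
    have h2 := ih (fun y hy => h y (by simp [hy]))
    push_cast
    linarith

lemma sum_const_nat (l : List ℕ) (a : ℕ) (h : ∀ x ∈ l, x = a) : l.sum = l.length * a := by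
  induction l with
  | nil => simp
  | cons x t ih =>
    simp only [List.sum_cons, List.length_cons]
    have h1 := h x (by simp)
    have h2 := ih (fun y hy => h y (by simp [hy]))
    rw [h1, h2]; ring

lemma map_sum_lin (L : List ℕ) (a : ℤ) :
    (L.map (fun y : ℕ => (y : ℤ) * (a - y))).sum
      = a * (L.sum : ℤ) - (L.map (fun x : ℕ => (x : ℤ) ^ 2)).sum := by
  induction L with
  | nil => simp
  | cons x t ih =>
    simp only [List.map_cons, List.sum_cons, Nat.cast_add]
    rw [ih]; ring

lemma merge_bound (a : ℤ) (L : List ℕ) (hpos : ∀ x ∈ L, 0 < x) (hle : (L.sum : ℤ) ≤ a) :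
    (L.sum : ℤ) * (a - L.sum) ≤ (L.map (fun y : ℕ => (y : ℤ) * (a - y))).sum := by
  induction L with
  | nil => simp
  | cons x t ih =>
    simp only [List.map_cons, List.sum_cons, Nat.cast_add] at *
    have hx : (1 : ℤ) ≤ x := by exact_mod_cast hpos x (by simp)
    have hts : (0 : ℤ) ≤ (t.sum : ℤ) := by positivity
    have h1 := ih (fun y hy => hpos y (by simp [hy])) (by linarith)
    nlinarith [h1, hx, hts]

lemma mem_le_sum_nat (l : List ℕ) (x : ℕ) (hx : x ∈ l) : x ≤ l.sum :=
  List.single_le_sum (fun y _ => Nat.zero_le y) x hx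

lemma sum_split_nat' (l : List ℕ) (p : ℕ → Bool) :
    (l.filter p).sum + (l.filter (fun x => !(p x))).sum = l.sum := by
  induction l with
  | nil => simp
  | cons x t ih =>
    by_cases hp : p x <;> simp [List.filter_cons, hp] <;> omega

lemma part_lemma (n : ℕ) (L : List ℕ) (hs : L.Pairwise (· ≥ ·)) (hpos : ∀ x ∈ L, 0 < x)
    (hsum : L.sum = n) (hlen : 2 ≤ L.length) :
    1 ≤ L.headI ∧ L.headI + 1 ≤ n ∧ 0 ≤ Dz n L ∧
      ((∀ x ∈ L, x = L.headI) ∧ n = L.headI * L.length ∨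
       (∃ s c : ℕ, 1 ≤ s ∧ s < L.headI ∧ n = L.headI * c + s ∧
          ((s : ℤ) * ((L.headI : ℤ) - s)) ≤ Dz n L) ∨
       (2 ≤ L.headI ∧ 2 * ((L.headI : ℤ) - 1) ≤ Dz n L)) := by
  set a := L.headI with ha
  -- max property
  have hmax : ∀ x ∈ L, x ≤ a := by
    cases L with
    | nil => simp at hlen
    | cons y t =>
      intro x hx
      rcases List.mem_cons.mp hx with rfl | h
      · simp [ha]
      · exact (List.pairwise_cons.mp hs).1 x h
  have ha1 : 1 ≤ a := by
    cases L with
    | nil => simp at hlen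
    | cons y t => exact hpos y (by simp)
  have han : a + 1 ≤ n := by
    cases L with
    | nil => simp at hlen
    | cons y t =>
      cases t with
      | nil => simp at hlen
      | cons z t' =>
        have hz : 1 ≤ z := hpos z (by simp)
        have h6 : y + (z + t'.sum) = n := by simpa [List.sum_cons] using hsum
        show y + 1 ≤ n
        omega
  -- rewrite Dz as sum of y*(a-y)
  have hDrw : Dz n L = (L.map (fun y : ℕ => (y : ℤ) * ((a : ℤ) - y))).sum := by
    rw [Dz, map_sum_lin, hsum]
  have hterm : ∀ x ∈ L, (0:ℤ) ≤ (x : ℤ) * ((a : ℤ) - x) := by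
    intro x hx
    have h1 : (0:ℤ) ≤ (x:ℤ) := by positivity
    have h2 : (x:ℤ) ≤ a := by exact_mod_cast hmax x hx
    nlinarith
  have hD0 : 0 ≤ Dz n L := by
    rw [hDrw]
    exact sum_map_nonneg _ _ (fun x hx => hterm x hx)
  refine ⟨ha1, han, hD0, ?_⟩
  set F := L.filter (fun y => decide (y < a)) with hF
  set G := L.filter (fun y => !(decide (y < a))) with hG
  have hFmem : ∀ x ∈ F, x ∈ L ∧ x < a := by
    intro x hx
    have := List.mem_filter.mp hx
    exact ⟨this.1, by simpa using this.2⟩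
  have hGmem : ∀ x ∈ G, x = a := by
    intro x hx
    have := List.mem_filter.mp hx
    have h1 : ¬ (x < a) := by simpa using this.2
    have h2 := hmax x this.1
    omega
  have hsplit : F.sum + G.sum = n := by
    rw [hF, hG, sum_split_nat', hsum]
  have hGsum : G.sum = G.length * a := sum_const_nat G a hGmem
  by_cases hs0 : F.sum = 0
  · -- uniform case
    left
    have hFnil : F = [] := by
      cases hFe : F with
      | nil => rfl
      | cons y t =>
        have hy : y ∈ F := by rw [hFe]; simp
        have h1 := hpos y (hFmem y hy).1
        have h2 : y ≤ F.sum := mem_le_sum_nat F y hy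
        omega
    have hall : ∀ x ∈ L, x = a := by
      intro x hx
      have h2 := hmax x hx
      rcases Nat.lt_or_ge x a with h | h
      · exfalso
        have : x ∈ F := by
          rw [hF]
          exact List.mem_filter.mpr ⟨hx, by simpa using h⟩
        rw [hFnil] at this; simp at this
      · omega
    refine ⟨hall, ?_⟩
    have h5 := sum_const_nat L a hall
    rw [hsum] at h5
    rw [h5, Nat.mul_comm]
  · have hs1 : 1 ≤ F.sum := Nat.one_le_iff_ne_zero.mpr hs0
    -- D ≥ sum over F
    have hDF : (F.map (fun y : ℕ => (y : ℤ) * ((a : ℤ) - y))).sum ≤ Dz n L := by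
      rw [hDrw]
      have := sum_map_split L (fun y => decide (y < a)) (fun y : ℕ => (y : ℤ) * ((a : ℤ) - y))
      have hGnn : 0 ≤ (G.map (fun y : ℕ => (y : ℤ) * ((a : ℤ) - y))).sum := by
        apply sum_map_nonneg
        intro x hx
        rw [hGmem x hx]
        simp
      rw [← hF, ← hG] at this
      linarith
    rcases Nat.lt_or_ge F.sum a with hsa | hsa
    · -- case B
      right; left
      refine ⟨F.sum, G.length, hs1, hsa, by rw [hGsum] at hsplit; rw [Nat.mul_comm]; omega, ?_⟩
      have hm := merge_bound (a : ℤ) F (fun x hx => hpos x (hFmem x hx).1)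
        (by exact_mod_cast Nat.le_of_lt hsa)
      linarith
    · -- case C
      right; right
      have hFlen : 2 ≤ F.length := by
        cases hFe : F with
        | nil => rw [hFe] at hs1; simp at hs1
        | cons y t =>
          cases t with
          | nil =>
            exfalso
            have hy : y ∈ F := by rw [hFe]; simp
            have h1 := (hFmem y hy).2
            rw [hFe] at hsa; simp at hsa
            omega
          | cons z t' => simp
      have ha2 : 2 ≤ a := by
        cases hFe : F with
        | nil => rw [hFe] at hs1; simp at hs1
        | cons y t =>
          have hy : y ∈ F := by rw [hFe]; simp
          have h1 := (hFmem y hy).2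
          have h2 := hpos y (hFmem y hy).1
          omega
      refine ⟨ha2, ?_⟩
      have hcard := sum_map_ge_card F (fun y : ℕ => (y : ℤ) * ((a : ℤ) - y)) ((a:ℤ) - 1) ?_
      · have : (2 : ℤ) ≤ (F.length : ℤ) := by exact_mod_cast hFlen
        have haz : (1:ℤ) ≤ (a:ℤ) := by exact_mod_cast ha1
        nlinarith [hcard, hDF]
      · intro x hx
        have h1 : 1 ≤ x := hpos x (hFmem x hx).1
        have h2 : x < a := (hFmem x hx).2
        have h1' : (1:ℤ) ≤ (x:ℤ) := by exact_mod_cast h1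
        have h2' : (x:ℤ) + 1 ≤ (a:ℤ) := by exact_mod_cast h2
        show ((a:ℤ) - 1) ≤ (x:ℤ) * ((a:ℤ) - (x:ℤ))
        nlinarith [mul_nonneg (by linarith : (0:ℤ) ≤ (x:ℤ) - 1) (by linarith : (0:ℤ) ≤ (a:ℤ) - 1 - (x:ℤ))]

lemma auxUUU' (n a b c : ℕ) (hn : 7 ≤ n) (ha : a ∣ n) (hb : b ∣ n) (_hc : c ∣ n)
    (ha2 : 2*a ≤ n) (_hb2 : 2*b ≤ n) (_hc2 : 2*c ≤ n) (habc : a + b + c = n)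
    (hcb : c ≤ b) (hba : b ≤ a) :
    ∃ k, 2 ≤ k ∧ k ∣ a ∧ k ∣ b ∧ k ∣ c := by
  obtain ⟨k, hk⟩ := ha
  have hc1 : 1 ≤ c := by
    rcases Nat.eq_zero_or_pos c with h | h
    · subst h; have := Nat.eq_zero_of_zero_dvd _hc; omega
    · exact h
  have hk2 : 2 ≤ k := by
    by_contra h
    interval_cases k <;> omega
  have hk3 : k ≤ 3 := by
    by_contra h
    have h4 : 4 ≤ k := by omega
    have := Nat.mul_le_mul (le_refl a) h4
    omega
  interval_cases k
  · -- n = a * 2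
    obtain ⟨j, hj⟩ := hb
    have hb1 : 1 ≤ b := by omega
    have hj3 : 3 ≤ j := by
      by_contra h
      interval_cases j <;> omega
    have hj4 : j ≤ 4 := by
      by_contra h
      have h5 : 5 ≤ j := by omega
      have := Nat.mul_le_mul (le_refl b) h5
      omega
    interval_cases j
    · -- n = b*3 : a = 3c, b = 2c
      exact ⟨c, by omega, ⟨3, by omega⟩, ⟨2, by omega⟩, dvd_refl c⟩
    · -- n = b*4 : a = 2b, c = b
      exact ⟨b, by omega, ⟨2, by omega⟩, dvd_refl b, ⟨1, by omega⟩⟩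
  · -- n = a * 3 : b = c = a
    exact ⟨a, by omega, dvd_refl a, ⟨1, by omega⟩, ⟨1, by omega⟩⟩

lemma auxUUU (n a b c : ℕ) (hn : 7 ≤ n) (ha : a ∣ n) (hb : b ∣ n) (hc : c ∣ n)
    (ha2 : 2*a ≤ n) (hb2 : 2*b ≤ n) (hc2 : 2*c ≤ n) (habc : a + b + c = n) :
    ∃ k, 2 ≤ k ∧ k ∣ a ∧ k ∣ b ∧ k ∣ c := by
  rcases le_total a b with h1 | h1 <;> rcases le_total b c with h2 | h2 <;>
    rcases le_total a c with h3 | h3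
  · obtain ⟨k, hk, d1, d2, d3⟩ := auxUUU' n c b a hn hc hb ha hc2 hb2 ha2 (by omega) h1 h2
    exact ⟨k, hk, d3, d2, d1⟩
  · obtain ⟨k, hk, d1, d2, d3⟩ := auxUUU' n c b a hn hc hb ha hc2 hb2 ha2 (by omega) h1 h2
    exact ⟨k, hk, d3, d2, d1⟩
  · obtain ⟨k, hk, d1, d2, d3⟩ := auxUUU' n b c a hn hb hc ha hb2 hc2 ha2 (by omega) h3 h2
    exact ⟨k, hk, d3, d1, d2⟩
  · obtain ⟨k, hk, d1, d2, d3⟩ := auxUUU' n b a c hn hb ha hc hb2 ha2 hc2 (by omega) h3 h1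
    exact ⟨k, hk, d2, d1, d3⟩
  · obtain ⟨k, hk, d1, d2, d3⟩ := auxUUU' n c a b hn hc ha hb hc2 ha2 hb2 (by omega) h1 h3
    exact ⟨k, hk, d2, d3, d1⟩
  · obtain ⟨k, hk, d1, d2, d3⟩ := auxUUU' n a c b hn ha hc hb ha2 hc2 hb2 (by omega) h2 h3
    exact ⟨k, hk, d1, d3, d2⟩
  · obtain ⟨k, hk, d1, d2, d3⟩ := auxUUU' n a b c hn ha hb hc ha2 hb2 hc2 (by omega) h2 h1
    exact ⟨k, hk, d1, d2, d3⟩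
  · obtain ⟨k, hk, d1, d2, d3⟩ := auxUUU' n a b c hn ha hb hc ha2 hb2 hc2 (by omega) h2 h1
    exact ⟨k, hk, d1, d2, d3⟩

lemma auxUUN' (n a b e : ℕ) (D : ℤ) (hn : 7 ≤ n) (ha : a ∣ n) (hb : b ∣ n)
    (ha2 : 2*a ≤ n) (hb2 : 2*b ≤ n) (he2 : 2 ≤ e) (he3 : 3*e + 4 ≤ n)
    (hsum : a + b + e = n) (hD0 : 0 ≤ D) (hD : 3*D ≤ (n:ℤ) - 7)
    (hBC : (∃ s c : ℕ, 1 ≤ s ∧ s < e ∧ n = e*c + s ∧ ((s:ℤ) * ((e:ℤ) - s)) ≤ D) ∨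
           (2 * ((e:ℤ) - 1) ≤ D))
    (hba : b ≤ a) : False := by
  obtain ⟨k, hk⟩ := ha
  have hk2 : k = 2 := by
    by_contra hne
    rcases Nat.lt_or_ge k 2 with h | h
    · interval_cases k <;> omega
    · have h3 : 3 ≤ k := by omega
      have := Nat.mul_le_mul (le_refl a) h3
      omega
  subst hk2
  obtain ⟨j, hj⟩ := hb
  have hb1 : 1 ≤ b := by omega
  have hj3 : 3 ≤ j := by
    by_contra h
    interval_cases j <;> omega
  have hj5 : j ≤ 5 := by
    by_contra h
    have h6 : 6 ≤ j := by omega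
    have := Nat.mul_le_mul (le_refl b) h6
    omega
  have he1 : 1 ≤ e := by omega
  interval_cases j
  · -- n = b*3, 6e = n
    have h6e : 6*e = n := by omega
    rcases hBC with ⟨s, c, hs1, hse, hnc, hsD⟩ | hC
    · rcases Nat.lt_or_ge c 6 with hc | hc
      · have := Nat.mul_le_mul (le_refl e) (show c ≤ 5 by omega)
        omega
      · have := Nat.mul_le_mul (le_refl e) hc
        omega
    · have h6e' : 6*(e:ℤ) = (n:ℤ) := by exact_mod_cast congrArg (Nat.cast : ℕ → ℤ) h6e
      linarith
  · -- n = b*4, 4e = n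
    have h4e : 4*e = n := by omega
    rcases hBC with ⟨s, c, hs1, hse, hnc, hsD⟩ | hC
    · rcases Nat.lt_or_ge c 4 with hc | hc
      · have := Nat.mul_le_mul (le_refl e) (show c ≤ 3 by omega)
        omega
      · have := Nat.mul_le_mul (le_refl e) hc
        omega
    · have h4e' : 4*(e:ℤ) = (n:ℤ) := by exact_mod_cast congrArg (Nat.cast : ℕ → ℤ) h4e
      linarith
  · -- n = b*5, 10e = 3n
    have h10e : 10*e = 3*n := by omega
    rcases hBC with ⟨s, c, hs1, hse, hnc, hsD⟩ | hC
    · have hc3 : c = 3 := by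
        rcases Nat.lt_or_ge c 3 with hc | hc
        · have := Nat.mul_le_mul (le_refl e) (show c ≤ 2 by omega)
          omega
        · rcases Nat.lt_or_ge c 4 with hc' | hc'
          · omega
          · have := Nat.mul_le_mul (le_refl e) hc'
            exfalso; omega
      subst hc3
      -- n = 10 s, e = 3 s
      have hes : e = 3*s ∧ n = 10*s := by constructor <;> omega
      have hsD' : (s:ℤ) * (2*(s:ℤ)) ≤ D := by
        have h1 : (e:ℤ) = 3*(s:ℤ) := by exact_mod_cast congrArg (Nat.cast : ℕ → ℤ) hes.1
        calc (s:ℤ) * (2*(s:ℤ)) = (s:ℤ) * ((e:ℤ) - s) := by rw [h1]; ring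
        _ ≤ D := hsD
      have hn10 : (n:ℤ) = 10*(s:ℤ) := by exact_mod_cast congrArg (Nat.cast : ℕ → ℤ) hes.2
      nlinarith [sq_nonneg (6*(s:ℤ) - 5)]
    · have h10e' : 10*(e:ℤ) = 3*(n:ℤ) := by exact_mod_cast congrArg (Nat.cast : ℕ → ℤ) h10e
      linarith

lemma auxUUN (n a b e : ℕ) (D : ℤ) (hn : 7 ≤ n) (ha : a ∣ n) (hb : b ∣ n)
    (ha2 : 2*a ≤ n) (hb2 : 2*b ≤ n) (he2 : 2 ≤ e) (he3 : 3*e + 4 ≤ n)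
    (hsum : a + b + e = n) (hD0 : 0 ≤ D) (hD : 3*D ≤ (n:ℤ) - 7)
    (hBC : (∃ s c : ℕ, 1 ≤ s ∧ s < e ∧ n = e*c + s ∧ ((s:ℤ) * ((e:ℤ) - s)) ≤ D) ∨
           (2 * ((e:ℤ) - 1) ≤ D)) : False := by
  rcases le_total b a with h | h
  · exact auxUUN' n a b e D hn ha hb ha2 hb2 he2 he3 hsum hD0 hD hBC h
  · exact auxUUN' n b a e D hn hb ha hb2 ha2 he2 he3 (by omega) hD0 hD hBC h

lemma auxUNN' (n a e1 e2 : ℕ) (D1 D2 : ℤ) (hn : 7 ≤ n) (ha : a ∣ n) (ha2 : 2*a ≤ n)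
    (hsum : a + e1 + e2 = n) (he12 : 2 ≤ e1) (he13 : 3*e1 + 4 ≤ n)
    (he22 : 2 ≤ e2) (he23 : 3*e2 + 4 ≤ n)
    (hD10 : 0 ≤ D1) (hD20 : 0 ≤ D2) (hDD : 3*D1 + 3*D2 ≤ (n:ℤ) - 7)
    (hBC1 : (∃ s c : ℕ, 1 ≤ s ∧ s < e1 ∧ n = e1*c + s ∧ ((s:ℤ) * ((e1:ℤ) - s)) ≤ D1) ∨
            (2 * ((e1:ℤ) - 1) ≤ D1))
    (hBC2 : (∃ s c : ℕ, 1 ≤ s ∧ s < e2 ∧ n = e2*c + s ∧ ((s:ℤ) * ((e2:ℤ) - s)) ≤ D2) ∨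
            (2 * ((e2:ℤ) - 1) ≤ D2))
    (h21 : e2 ≤ e1) : False := by
  obtain ⟨k, hk⟩ := ha
  have hk2 : k = 2 := by
    by_contra hne
    rcases Nat.lt_or_ge k 2 with h | h
    · interval_cases k <;> omega
    · have h3 : 3 ≤ k := by omega
      have := Nat.mul_le_mul (le_refl a) h3
      omega
  subst hk2
  -- n = a*2, e1 + e2 = a, 4*e1 ≥ n, 6*e2 ≥ n + 8, 4*e2 ≤ n
  have h4e1 : n ≤ 4*e1 := by omega
  have h6e2 : n + 8 ≤ 6*e2 := by omega
  have h4e2 : 4*e2 ≤ n := by omega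
  rcases hBC1 with ⟨s1, c1, hs11, hs1e, hnc1, hsD1⟩ | hC1
  · have hc13 : c1 = 3 := by
      rcases Nat.lt_or_ge c1 3 with hc | hc
      · have := Nat.mul_le_mul (le_refl e1) (show c1 ≤ 2 by omega)
        omega
      · rcases Nat.lt_or_ge c1 4 with hc' | hc'
        · omega
        · have := Nat.mul_le_mul (le_refl e1) hc'
          exfalso; omega
    subst hc13
    -- s1 = n - 3 e1, s1 ≥ 4, e1 - s1 = 4 e1 - n ≥ 1
    have hs14 : 4 ≤ s1 := by omega
    rcases hBC2 with ⟨s2, c2, hs21, hs2e, hnc2, hsD2⟩ | hC2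
    · have hc2b : c2 = 4 ∨ c2 = 5 := by
        rcases Nat.lt_or_ge c2 4 with hc | hc
        · have := Nat.mul_le_mul (le_refl e2) (show c2 ≤ 3 by omega)
          exfalso; omega
        · rcases Nat.lt_or_ge c2 6 with hc' | hc'
          · omega
          · have := Nat.mul_le_mul (le_refl e2) hc'
            exfalso; omega
      -- cast facts
      have C1 : (n:ℤ) = (e1:ℤ)*3 + s1 := by exact_mod_cast congrArg (Nat.cast : ℕ → ℤ) hnc1
      have Cs14 : (4:ℤ) ≤ (s1:ℤ) := by exact_mod_cast hs14
      have Cs1e : (s1:ℤ) + 1 ≤ (e1:ℤ) := by exact_mod_cast hs1e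
      have Cs21 : (1:ℤ) ≤ (s2:ℤ) := by exact_mod_cast hs21
      have Cs2e : (s2:ℤ) + 1 ≤ (e2:ℤ) := by exact_mod_cast hs2e
      have Csum : (a:ℤ) + e1 + e2 = n := by exact_mod_cast congrArg (Nat.cast : ℕ → ℤ) hsum
      have Cn : (n:ℤ) = (a:ℤ)*2 := by exact_mod_cast congrArg (Nat.cast : ℕ → ℤ) hk
      rcases hc2b with rfl | rfl
      · have C2 : (n:ℤ) = (e2:ℤ)*4 + s2 := by exact_mod_cast congrArg (Nat.cast : ℕ → ℤ) hnc2
        -- X := e1 - s1 = s2,  Z := s1 + (e2 - s2), 4X + 2Z = n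
        nlinarith [hsD1, hsD2, mul_nonneg (by linarith : (0:ℤ) ≤ (e1:ℤ) - s1 - 1)
          (by linarith : (0:ℤ) ≤ (s1:ℤ) + ((e2:ℤ) - s2) - 5)]
      · have C2 : (n:ℤ) = (e2:ℤ)*5 + s2 := by exact_mod_cast congrArg (Nat.cast : ℕ → ℤ) hnc2
        have hd1 : 2*((s1:ℤ)*(s1:ℤ)) + 2*((s1:ℤ)*(s2:ℤ)) ≤ D1 := by
          have h5 : (e1:ℤ) - s1 = 2*(s1:ℤ) + 2*(s2:ℤ) := by linarith
          have h6 : (s1:ℤ) * ((e1:ℤ) - s1) = 2*((s1:ℤ)*(s1:ℤ)) + 2*((s1:ℤ)*(s2:ℤ)) := by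
            rw [h5]; ring
          linarith [hsD1, h6.symm.le]
        have hd2 : 2*((s1:ℤ)*(s2:ℤ)) ≤ D2 := by
          have h5 : (e2:ℤ) - s2 = 2*(s1:ℤ) := by linarith
          have h6 : (s2:ℤ) * ((e2:ℤ) - s2) = 2*((s1:ℤ)*(s2:ℤ)) := by rw [h5]; ring
          linarith [hsD2, h6.symm.le]
        have hn' : (n:ℤ) = 10*(s1:ℤ) + 6*(s2:ℤ) := by linarith
        have P1 : (4:ℤ)*(s1:ℤ) ≤ (s1:ℤ)*(s1:ℤ) :=
          mul_le_mul_of_nonneg_right (by linarith) (by linarith)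
        have P2 : (4:ℤ)*(s2:ℤ) ≤ (s1:ℤ)*(s2:ℤ) :=
          mul_le_mul_of_nonneg_right (by linarith) (by linarith)
        linarith [hd1, hd2, hn', P1, P2]
    · -- C2 : 3*D2 ≥ 6*e2 - 6 ≥ n + 2
      have h6 : ((n:ℤ)) + 8 ≤ 6*(e2:ℤ) := by exact_mod_cast h6e2
      linarith
  · -- C1 : 3*D1 ≥ 6*e1 - 6, 4 e1 ≥ n
    have h4 : ((n:ℤ)) ≤ 4*(e1:ℤ) := by exact_mod_cast h4e1
    linarith

lemma auxUNN (n a e1 e2 : ℕ) (D1 D2 : ℤ) (hn : 7 ≤ n) (ha : a ∣ n) (ha2 : 2*a ≤ n)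
    (hsum : a + e1 + e2 = n) (he12 : 2 ≤ e1) (he13 : 3*e1 + 4 ≤ n)
    (he22 : 2 ≤ e2) (he23 : 3*e2 + 4 ≤ n)
    (hD10 : 0 ≤ D1) (hD20 : 0 ≤ D2) (hDD : 3*D1 + 3*D2 ≤ (n:ℤ) - 7)
    (hBC1 : (∃ s c : ℕ, 1 ≤ s ∧ s < e1 ∧ n = e1*c + s ∧ ((s:ℤ) * ((e1:ℤ) - s)) ≤ D1) ∨
            (2 * ((e1:ℤ) - 1) ≤ D1))
    (hBC2 : (∃ s c : ℕ, 1 ≤ s ∧ s < e2 ∧ n = e2*c + s ∧ ((s:ℤ) * ((e2:ℤ) - s)) ≤ D2) ∨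
            (2 * ((e2:ℤ) - 1) ≤ D2)) : False := by
  rcases le_total e2 e1 with h | h
  · exact auxUNN' n a e1 e2 D1 D2 hn ha ha2 hsum he12 he13 he22 he23 hD10 hD20 hDD hBC1 hBC2 h
  · exact auxUNN' n a e2 e1 D2 D1 hn ha ha2 (by omega) he22 he23 he12 he13 hD20 hD10
      (by linarith) hBC2 hBC1 h

/-- If `m` is a basic tuple of `p` partitions of `n`, then `n ≤ 3·|idx m| + 6`. -/
theorem ord_bound_of_basic (p n : ℕ) (m : Fin p → List ℕ)
    (hbasic : IsBasic p n m) :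
    (n : ℤ) ≤ 3 * |idx p n m| + 6 := by
  obtain ⟨⟨hn, htup⟩, hS, hindiv⟩ := hbasic
  have hpart := fun j => part_lemma n (m j) (htup j).1 (htup j).2.1 (htup j).2.2.1 (htup j).2.2.2
  -- index identity
  have hterm : ∀ j, (n:ℤ)^2 - ((m j).map (fun x => (x : ℤ) ^ 2)).sum
      = ((n:ℤ) - ((m j).headI : ℤ)) * n + Dz n (m j) := by
    intro j
    rw [coe_fix, Dz]
    ring
  have hidx : idx p n m
      = 2*(n:ℤ)^2 - ((∑ j : Fin p, ((n:ℤ) - ((m j).headI : ℤ))) * n + ∑ j : Fin p, Dz n (m j)) := by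
    rw [idx, Finset.sum_congr rfl (fun j _ => hterm j), Finset.sum_add_distrib, Finset.sum_mul]
  have hT0 : 0 ≤ ∑ j : Fin p, Dz n (m j) :=
    Finset.sum_nonneg (fun j _ => (hpart j).2.2.1)
  have hn0 : (0:ℤ) ≤ (n:ℤ) := by positivity
  have hSn : 2*(n:ℤ)*n ≤ (∑ j : Fin p, ((n:ℤ) - ((m j).headI : ℤ))) * n :=
    mul_le_mul_of_nonneg_right hS hn0
  have habs : |idx p n m| = - idx p n m := by
    apply abs_of_nonpos
    rw [hidx]
    nlinarith [hSn, hT0]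
  rw [habs, hidx]
  rcases eq_or_lt_of_le hS with hSe | hSl
  · -- S = 2n exactly; goal becomes n ≤ 3T + 6
    rw [← hSe]
    by_contra hcon
    push_neg at hcon
    have hcon' : 3 * (∑ j : Fin p, Dz n (m j)) + 6 < (n:ℤ) := by nlinarith [hcon]
    have hn7 : (7:ℤ) ≤ (n:ℤ) := by linarith
    have hn7' : 7 ≤ n := by exact_mod_cast hn7
    have hDle : ∀ j, 3 * Dz n (m j) ≤ (n:ℤ) - 7 := by
      intro j
      have h1 : Dz n (m j) ≤ ∑ i : Fin p, Dz n (m i) :=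
        Finset.single_le_sum (f := fun i => Dz n (m i)) (fun i _ => (hpart i).2.2.1)
          (Finset.mem_univ j)
      linarith
    -- classification of each partition
    have hclass : ∀ j, ((∀ x ∈ m j, x = (m j).headI) ∧ ((m j).headI ∣ n) ∧ 2*(m j).headI ≤ n) ∨
        (2 ≤ (m j).headI ∧ 3*(m j).headI + 4 ≤ n ∧
          ((∃ s c : ℕ, 1 ≤ s ∧ s < (m j).headI ∧ n = (m j).headI*c + s ∧
              ((s:ℤ)*(((m j).headI:ℤ) - s)) ≤ Dz n (m j)) ∨
           2*(((m j).headI:ℤ) - 1) ≤ Dz n (m j))) := by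
      intro j
      obtain ⟨h1, h2, h3, h4⟩ := hpart j
      rcases h4 with ⟨hall, hlen⟩ | hB | ⟨ha2', hC⟩
      · left
        refine ⟨hall, ⟨(m j).length, hlen⟩, ?_⟩
        have h5 := Nat.mul_le_mul (le_refl (m j).headI) (htup j).2.2.2
        omega
      · right
        obtain ⟨s, c, hs1, hsa, hnc, hsD⟩ := hB
        have ha2' : 2 ≤ (m j).headI := by omega
        have hD1 : ((m j).headI : ℤ) - 1 ≤ Dz n (m j) := by
          have c1 : (1:ℤ) ≤ (s:ℤ) := by exact_mod_cast hs1
          have c2 : (s:ℤ) + 1 ≤ ((m j).headI:ℤ) := by exact_mod_cast hsa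
          nlinarith [hsD, mul_nonneg (by linarith : (0:ℤ) ≤ (s:ℤ) - 1)
            (by linarith : (0:ℤ) ≤ ((m j).headI:ℤ) - (s:ℤ) - 1)]
        have h6 : 3*((m j).headI:ℤ) + 4 ≤ (n:ℤ) := by linarith [hDle j]
        exact ⟨ha2', by exact_mod_cast h6, Or.inl ⟨s, c, hs1, hsa, hnc, hsD⟩⟩
      · right
        have h6 : 3*((m j).headI:ℤ) + 4 ≤ (n:ℤ) := by
          have := hDle j
          have c2 : (2:ℤ) ≤ ((m j).headI:ℤ) := by exact_mod_cast ha2'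
          linarith
        exact ⟨ha2', by exact_mod_cast h6, Or.inr hC⟩
    -- every d_j is at least n/2
    have hd2 : ∀ j, (n:ℤ) ≤ 2*((n:ℤ) - ((m j).headI:ℤ)) := by
      intro j
      rcases hclass j with ⟨_, _, h2a⟩ | ⟨_, h3a, _⟩
      · have : (2*(m j).headI : ℤ) ≤ (n:ℤ) := by exact_mod_cast h2a
        push_cast at this ⊢
        linarith
      · have : (3*(m j).headI + 4 : ℤ) ≤ (n:ℤ) := by exact_mod_cast h3a
        push_cast at this ⊢
        linarith
    have hub : ∀ j, (n:ℤ) - ((m j).headI:ℤ) ≤ (n:ℤ) - 1 := by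
      intro j
      have h1 : (1:ℤ) ≤ ((m j).headI:ℤ) := by exact_mod_cast (hpart j).1
      linarith
    have hpn : (p:ℤ) * n ≤ 4 * n := by
      have h1 : ∑ j : Fin p, (n:ℤ) ≤ ∑ j : Fin p, 2*((n:ℤ) - ((m j).headI:ℤ)) :=
        Finset.sum_le_sum (fun j _ => hd2 j)
      have h2 : ∑ j : Fin p, (n:ℤ) = (p:ℤ) * n := by
        simp [Finset.sum_const, Finset.card_univ, mul_comm]
      have h3 : ∑ j : Fin p, 2*((n:ℤ) - ((m j).headI:ℤ))
          = 2 * ∑ j : Fin p, ((n:ℤ) - ((m j).headI:ℤ)) := by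
        rw [Finset.mul_sum]
      rw [h2, h3, ← hSe] at h1
      linarith
    have hp4 : p ≤ 4 := by
      by_contra h
      have h5 : (5:ℤ) ≤ (p:ℤ) := by exact_mod_cast (by omega : 5 ≤ p)
      nlinarith [hpn, hn7]
    have hp3 : 3 ≤ p := by
      by_contra h
      have h2 : (p:ℤ) ≤ 2 := by exact_mod_cast (by omega : p ≤ 2)
      have h1 : ∑ j : Fin p, ((n:ℤ) - ((m j).headI:ℤ)) ≤ ∑ j : Fin p, ((n:ℤ) - 1) :=
        Finset.sum_le_sum (fun j _ => hub j)
      have h3 : ∑ j : Fin p, ((n:ℤ) - 1) = (p:ℤ) * ((n:ℤ) - 1) := by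
        simp [Finset.sum_const, Finset.card_univ, mul_comm]; ring
      rw [h3, ← hSe] at h1
      nlinarith [h1, hn7]
    -- now p = 3 or p = 4
    rcases (show p = 3 ∨ p = 4 by omega) with rfl | rfl
    · -- p = 3
      rw [Fin.sum_univ_three] at hSe
      rw [Fin.sum_univ_three] at hcon'
      have habcZ : ((m 0).headI : ℤ) + ((m 1).headI : ℤ) + ((m 2).headI : ℤ) = (n:ℤ) := by
        linarith
      have habcN : (m 0).headI + (m 1).headI + (m 2).headI = n := by exact_mod_cast habcZ
      have hD0 := fun (j : Fin 3) => (hpart j).2.2.1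
      rcases hclass 0 with hU0 | hN0 <;> rcases hclass 1 with hU1 | hN1 <;>
        rcases hclass 2 with hU2 | hN2
      · -- UUU
        obtain ⟨k, hk2, d0, d1, d2⟩ := auxUUU n (m 0).headI (m 1).headI (m 2).headI hn7'
          hU0.2.1 hU1.2.1 hU2.2.1 hU0.2.2 hU1.2.2 hU2.2.2 habcN
        have hk1 : k = 1 := hindiv k (by
          intro j x hx
          fin_cases j
          · rw [hU0.1 x hx]; exact d0
          · rw [hU1.1 x hx]; exact d1
          · rw [hU2.1 x hx]; exact d2)
        omega
      · -- U U N
        exact auxUUN n (m 0).headI (m 1).headI (m 2).headI (Dz n (m 2)) hn7'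
          hU0.2.1 hU1.2.1 hU0.2.2 hU1.2.2 hN2.1 hN2.2.1 habcN (hD0 2) (hDle 2) hN2.2.2
      · -- U N U
        exact auxUUN n (m 0).headI (m 2).headI (m 1).headI (Dz n (m 1)) hn7'
          hU0.2.1 hU2.2.1 hU0.2.2 hU2.2.2 hN1.1 hN1.2.1 (by omega) (hD0 1) (hDle 1) hN1.2.2
      · -- U N N
        exact auxUNN n (m 0).headI (m 1).headI (m 2).headI (Dz n (m 1)) (Dz n (m 2)) hn7'
          hU0.2.1 hU0.2.2 habcN hN1.1 hN1.2.1 hN2.1 hN2.2.1 (hD0 1) (hD0 2)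
          (by linarith [hD0 0]) hN1.2.2 hN2.2.2
      · -- N U U
        exact auxUUN n (m 1).headI (m 2).headI (m 0).headI (Dz n (m 0)) hn7'
          hU1.2.1 hU2.2.1 hU1.2.2 hU2.2.2 hN0.1 hN0.2.1 (by omega) (hD0 0) (hDle 0) hN0.2.2
      · -- N U N
        exact auxUNN n (m 1).headI (m 0).headI (m 2).headI (Dz n (m 0)) (Dz n (m 2)) hn7'
          hU1.2.1 hU1.2.2 (by omega) hN0.1 hN0.2.1 hN2.1 hN2.2.1 (hD0 0) (hD0 2)
          (by linarith [hD0 1]) hN0.2.2 hN2.2.2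
      · -- N N U
        exact auxUNN n (m 2).headI (m 0).headI (m 1).headI (Dz n (m 0)) (Dz n (m 1)) hn7'
          hU2.2.1 hU2.2.2 (by omega) hN0.1 hN0.2.1 hN1.1 hN1.2.1 (hD0 0) (hD0 1)
          (by linarith [hD0 2]) hN0.2.2 hN1.2.2
      · -- N N N
        have := hN0.2.1
        have := hN1.2.1
        have := hN2.2.1
        omega
    · -- p = 4
      have hSe4 := hSe
      rw [Fin.sum_univ_four] at hSe4
      have hUall : ∀ j : Fin 4, (∀ x ∈ m j, x = (m j).headI) ∧ ((m j).headI ∣ n) ∧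
          2*(m j).headI ≤ n := by
        intro j
        rcases hclass j with h | hN
        · exact h
        · exfalso
          have hNc : 3*((m j).headI:ℤ) + 4 ≤ (n:ℤ) := by exact_mod_cast hN.2.1
          have hpeel := Finset.sum_erase_add Finset.univ
            (fun i => (n:ℤ) - ((m i).headI:ℤ)) (Finset.mem_univ j)
          have hcard : (Finset.univ.erase j).card = 3 := by
            rw [Finset.card_erase_of_mem (Finset.mem_univ j)]
            simp
          have h1 : (3:ℤ)*(n:ℤ) ≤ ∑ i ∈ Finset.univ.erase j, 2*((n:ℤ) - ((m i).headI:ℤ)) := by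
            calc (3:ℤ)*(n:ℤ) = ∑ _i ∈ Finset.univ.erase j, (n:ℤ) := by
                  rw [Finset.sum_const, hcard]; push_cast; ring
            _ ≤ _ := Finset.sum_le_sum (fun i _ => hd2 i)
          rw [Finset.sum_congr rfl (fun (i : Fin 4) _ => rfl), ← Finset.mul_sum] at h1
          have hpeel' : (∑ i ∈ Finset.univ.erase j, ((n:ℤ) - ((m i).headI:ℤ)))
              + ((n:ℤ) - ((m j).headI:ℤ)) = ∑ i : Fin 4, ((n:ℤ) - ((m i).headI:ℤ)) := hpeel
          linarith [hpeel', hSe, h1]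
      have e0 := (hUall 0).2.2
      have e1 := (hUall 1).2.2
      have e2 := (hUall 2).2.2
      have e3 := (hUall 3).2.2
      have habcdZ : ((m 0).headI:ℤ) + ((m 1).headI:ℤ) + ((m 2).headI:ℤ) + ((m 3).headI:ℤ)
          = 2*(n:ℤ) := by linarith
      have habcdN : (m 0).headI + (m 1).headI + (m 2).headI + (m 3).headI = 2*n := by
        exact_mod_cast habcdZ
      have h00 : 2*(m 0).headI = n := by omega
      have h11 : 2*(m 1).headI = n := by omega
      have h22 : 2*(m 2).headI = n := by omega
      have h33 : 2*(m 3).headI = n := by omega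
      have hk1 : (m 0).headI = 1 := hindiv (m 0).headI (by
        intro j x hx
        fin_cases j
        · rw [(hUall 0).1 x hx]
        · rw [(hUall 1).1 x hx]; exact ⟨1, by omega⟩
        · rw [(hUall 2).1 x hx]; exact ⟨1, by omega⟩
        · rw [(hUall 3).1 x hx]; exact ⟨1, by omega⟩)
      omega
  · -- S ≥ 2n + 1
    have h1 : 2*(n:ℤ) + 1 ≤ ∑ j : Fin p, ((n:ℤ) - ((m j).headI : ℤ)) := hSl
    have h2 : (2*(n:ℤ) + 1) * n ≤ (∑ j : Fin p, ((n:ℤ) - ((m j).headI : ℤ))) * n :=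
      mul_le_mul_of_nonneg_right h1 hn0
    nlinarith [hT0, h2, hn0]
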